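/- arXiv:1305.5697 — 3 statements merged into one kernel-verified Lean document; each statement's English description precedes it below -/
import Mathlib

section
/- Let γ ∈ [1/2, 1) have binary expansion γ = Σ_{k≥1} ε_k/2^k with ε_k ∈ {0,1} and ε_k = 0 for infinitely many k (so necessarily ε₁ = 1). Define f(γ) = 2γ − Σ_{k≥1} k·ε_k/2^k. Then f(γ/2 + 1/2) = (1/2)(1 − γ + f(γ)) and f(γ/2 + 1/4) = (1/2)(1 − γ + f(γ)). -/
/-- The `k`-th binary digit of `x` (for `k ≥ 1`), via the floor expansion; this is the
expansion with infinitely many zero digits. -/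
noncomputable def binDigit (x : ℝ) (k : ℕ) : ℤ :=
  ⌊2 ^ k * x⌋ - 2 * ⌊2 ^ (k - 1) * x⌋

/-- `f(γ) = 2γ − Σ_{k≥1} k ε_k 2^{-k}` where `(ε_k)` are the binary digits of `γ`. -/
noncomputable def fSteinhaus (γ : ℝ) : ℝ :=
  2 * γ - ∑' k : ℕ, ((k + 1 : ℕ) : ℝ) * (binDigit γ (k + 1) : ℝ) / 2 ^ (k + 1)

open Filter Topology Finset

private lemma binDigit_succ (x : ℝ) (k : ℕ) :
    binDigit x (k + 1) = ⌊2 ^ (k + 1) * x⌋ - 2 * ⌊2 ^ k * x⌋ := by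
  simp [binDigit]

private lemma digit01 (x : ℝ) (k : ℕ) :
    binDigit x (k + 1) = 0 ∨ binDigit x (k + 1) = 1 := by
  rw [binDigit_succ]
  set y := (2 : ℝ) ^ k * x with hy
  have hxy : (2 : ℝ) ^ (k + 1) * x = 2 * y := by rw [hy]; ring
  rw [hxy]
  have h1 : 2 * ⌊y⌋ ≤ ⌊2 * y⌋ := by
    apply Int.le_floor.mpr
    push_cast
    nlinarith [Int.floor_le y]
  have h2 : ⌊2 * y⌋ < 2 * ⌊y⌋ + 2 := by
    apply Int.floor_lt.mpr
    push_cast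
    nlinarith [Int.lt_floor_add_one y]
  omega

private lemma binDigit_one (x : ℝ) : binDigit x 1 = ⌊2 * x⌋ - 2 * ⌊x⌋ := by
  simp [binDigit]

private lemma digit_norm_le (x : ℝ) (k : ℕ) :
    ‖((k + 1 : ℕ) : ℝ) * (binDigit x (k + 1) : ℝ) / 2 ^ (k + 1)‖
      ≤ ((k + 1 : ℕ) : ℝ) * (1 / 2 : ℝ) ^ (k + 1) := by
  rcases digit01 x k with h | h
  · rw [h]
    simp only [Int.cast_zero, mul_zero, zero_div, norm_zero]
    positivity
  · rw [h, Int.cast_one, mul_one, Real.norm_eq_abs, abs_of_nonneg (by positivity),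
      one_div, inv_pow, div_eq_mul_inv]

private lemma summable_kdigit (x : ℝ) :
    Summable (fun k : ℕ => ((k + 1 : ℕ) : ℝ) * (binDigit x (k + 1) : ℝ) / 2 ^ (k + 1)) := by
  have base : Summable (fun n : ℕ => (n : ℝ) * (1 / 2 : ℝ) ^ n) := by
    simpa using summable_pow_mul_geometric_of_norm_lt_one 1 (r := (1 / 2 : ℝ)) (by norm_num)
  have shifted : Summable (fun n : ℕ => ((n + 1 : ℕ) : ℝ) * (1 / 2 : ℝ) ^ (n + 1)) :=
    (summable_nat_add_iff 1).mpr base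
  exact Summable.of_norm_bounded shifted (digit_norm_le x)

private lemma summable_digit (x : ℝ) :
    Summable (fun k : ℕ => (binDigit x (k + 1) : ℝ) / 2 ^ (k + 1)) := by
  have base : Summable (fun n : ℕ => (1 / 2 : ℝ) ^ (n + 1)) :=
    (summable_nat_add_iff 1).mpr (summable_geometric_of_lt_one (by norm_num) (by norm_num))
  refine Summable.of_norm_bounded base (fun k => ?_)
  rcases digit01 x k with h | h
  · rw [h]
    simp only [Int.cast_zero, zero_div, norm_zero]
    positivity
  · rw [h, Int.cast_one, Real.norm_eq_abs, abs_of_nonneg (by positivity)]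
    simp [one_div, inv_pow]

private lemma tsum_digit (x : ℝ) (h0 : 0 ≤ x) (h1 : x < 1) :
    ∑' k : ℕ, (binDigit x (k + 1) : ℝ) / 2 ^ (k + 1) = x := by
  set g : ℕ → ℝ := fun n => (⌊(2 : ℝ) ^ n * x⌋ : ℝ) / 2 ^ n with hg
  have hterm : ∀ k : ℕ, (binDigit x (k + 1) : ℝ) / 2 ^ (k + 1) = g (k + 1) - g k := by
    intro k
    rw [binDigit_succ, hg]
    push_cast
    field_simp
    ring
  have hg0 : g 0 = 0 := by
    have : ⌊x⌋ = 0 := Int.floor_eq_zero_iff.mpr ⟨h0, h1⟩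
    simp [hg, this]
  have hpart : ∀ n : ℕ, ∑ i ∈ range n, (binDigit x (i + 1) : ℝ) / 2 ^ (i + 1) = g n := by
    intro n
    rw [Finset.sum_congr rfl (fun i _ => hterm i), Finset.sum_range_sub, hg0, sub_zero]
  have hb : ∀ n : ℕ, ‖g n - x‖ ≤ (1 / 2 : ℝ) ^ n := by
    intro n
    have hp : (0 : ℝ) < 2 ^ n := by positivity
    have heq : g n - x = ((⌊(2 : ℝ) ^ n * x⌋ : ℝ) - 2 ^ n * x) / 2 ^ n := by
      simp only [hg]
      field_simp
    have hnum : |(⌊(2 : ℝ) ^ n * x⌋ : ℝ) - 2 ^ n * x| ≤ 1 := by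
      rw [abs_le]
      constructor <;> [linarith [Int.lt_floor_add_one ((2 : ℝ) ^ n * x)];
        linarith [Int.floor_le ((2 : ℝ) ^ n * x)]]
    rw [Real.norm_eq_abs, heq, abs_div, abs_of_pos hp, div_pow, one_pow]
    gcongr
  have htend0 : Filter.Tendsto (fun n => g n - x) atTop (𝓝 0) :=
    squeeze_zero_norm hb (tendsto_pow_atTop_nhds_zero_of_lt_one (by norm_num) (by norm_num))
  have htend : Filter.Tendsto g atTop (𝓝 x) := by
    have := htend0.add_const x
    simpa using this
  have hhs : HasSum (fun k : ℕ => (binDigit x (k + 1) : ℝ) / 2 ^ (k + 1)) x := by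
    rw [(summable_digit x).hasSum_iff_tendsto_nat]
    simpa [hpart] using htend
  exact hhs.tsum_eq

/-- digits of `y/2 + 1/2`: first digit 1, then the digits of `y`. -/
private lemma digit_half_add (y : ℝ) (h0 : 0 ≤ y) (h1 : y < 1) :
    binDigit (y / 2 + 1 / 2) 1 = 1 ∧
      ∀ k : ℕ, binDigit (y / 2 + 1 / 2) (k + 2) = binDigit y (k + 1) := by
  have hfl : ∀ m : ℕ, ⌊(2 : ℝ) ^ (m + 1) * (y / 2 + 1 / 2)⌋ = ⌊(2 : ℝ) ^ m * y⌋ + 2 ^ m := by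
    intro m
    have he : (2 : ℝ) ^ (m + 1) * (y / 2 + 1 / 2) = 2 ^ m * y + ((2 ^ m : ℤ) : ℝ) := by
      push_cast; ring
    rw [he, Int.floor_add_intCast]
  constructor
  · have hx0 : ⌊(y / 2 + 1 / 2 : ℝ)⌋ = 0 := by
      apply Int.floor_eq_zero_iff.mpr
      constructor <;> simp <;> linarith
    have hy0 : ⌊y⌋ = 0 := Int.floor_eq_zero_iff.mpr ⟨h0, h1⟩
    have h2x : ⌊(2 : ℝ) * (y / 2 + 1 / 2)⌋ = 1 := by
      have he : (2 : ℝ) * (y / 2 + 1 / 2) = y + ((1 : ℤ) : ℝ) := by push_cast; ring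
      rw [he, Int.floor_add_intCast, hy0]
      norm_num
    rw [binDigit_one, h2x, hx0]
    norm_num
  · intro k
    have e1 : binDigit (y / 2 + 1 / 2) (k + 2)
        = ⌊(2:ℝ)^(k+2) * (y / 2 + 1 / 2)⌋ - 2 * ⌊(2:ℝ)^(k+1) * (y / 2 + 1 / 2)⌋ :=
      binDigit_succ _ (k + 1)
    rw [e1, hfl (k + 1), hfl k, binDigit_succ]
    ring

/-- `S x` abbreviation identity: if `x`'s digits are `1` followed by digits of `y ∈ [0,1)`,
i.e. `x = y/2 + 1/2`, then `S x = 1/2 + S y / 2 + y / 2`. -/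
private lemma S_half_add (y : ℝ) (h0 : 0 ≤ y) (h1 : y < 1) :
    (∑' k : ℕ, ((k + 1 : ℕ) : ℝ) * (binDigit (y / 2 + 1 / 2) (k + 1) : ℝ) / 2 ^ (k + 1))
      = 1 / 2 + (1 / 2) * (∑' k : ℕ, ((k + 1 : ℕ) : ℝ) * (binDigit y (k + 1) : ℝ) / 2 ^ (k + 1))
        + (1 / 2) * y := by
  obtain ⟨hd1, hdS⟩ := digit_half_add y h0 h1
  rw [Summable.tsum_eq_zero_add (summable_kdigit _)]
  have htail : (∑' k : ℕ, ((k + 1 + 1 : ℕ) : ℝ) * (binDigit (y / 2 + 1 / 2) (k + 1 + 1) : ℝ)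
        / 2 ^ (k + 1 + 1))
      = (1 / 2) * (∑' k : ℕ, ((k + 1 : ℕ) : ℝ) * (binDigit y (k + 1) : ℝ) / 2 ^ (k + 1))
        + (1 / 2) * (∑' k : ℕ, (binDigit y (k + 1) : ℝ) / 2 ^ (k + 1)) := by
    have hterm : ∀ k : ℕ, ((k + 1 + 1 : ℕ) : ℝ) * (binDigit (y / 2 + 1 / 2) (k + 1 + 1) : ℝ)
          / 2 ^ (k + 1 + 1)
        = (1 / 2) * (((k + 1 : ℕ) : ℝ) * (binDigit y (k + 1) : ℝ) / 2 ^ (k + 1))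
          + (1 / 2) * ((binDigit y (k + 1) : ℝ) / 2 ^ (k + 1)) := by
      intro k
      rw [show k + 1 + 1 = k + 2 from rfl, hdS k]
      push_cast
      field_simp
      ring
    rw [tsum_congr hterm,
      Summable.tsum_add ((summable_kdigit y).mul_left _) ((summable_digit y).mul_left _),
      tsum_mul_left, tsum_mul_left]
  rw [htail, hd1, tsum_digit y h0 h1]
  push_cast
  ring

/-- digits of `γ - 1/2` for `γ ∈ [1/2, 1)`: first digit 0, then the same tail as `γ`. -/
private lemma S_sub_half (γ : ℝ) (h1 : 1 / 2 ≤ γ) (h2 : γ < 1) :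
    (∑' k : ℕ, ((k + 1 : ℕ) : ℝ) * (binDigit (γ - 1 / 2) (k + 1) : ℝ) / 2 ^ (k + 1))
      = (∑' k : ℕ, ((k + 1 : ℕ) : ℝ) * (binDigit γ (k + 1) : ℝ) / 2 ^ (k + 1)) - 1 / 2 := by
  have hfl : ∀ m : ℕ, ⌊(2 : ℝ) ^ (m + 1) * (γ - 1 / 2)⌋ = ⌊(2 : ℝ) ^ (m + 1) * γ⌋ - 2 ^ m := by
    intro m
    have he : (2 : ℝ) ^ (m + 1) * (γ - 1 / 2) = 2 ^ (m + 1) * γ + ((-(2 ^ m) : ℤ) : ℝ) := by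
      push_cast; ring
    rw [he, Int.floor_add_intCast]; ring
  have h2γ : ⌊(2 : ℝ) * γ⌋ = 1 := by
    apply Int.floor_eq_iff.mpr
    constructor <;> push_cast <;> linarith
  have hd0 : binDigit (γ - 1 / 2) 1 = 0 := by
    have hfloor : ⌊(γ - 1 / 2 : ℝ)⌋ = 0 := Int.floor_eq_zero_iff.mpr ⟨by linarith, by linarith⟩
    have ha : ⌊(2 : ℝ) * (γ - 1 / 2)⌋ = 0 := by
      have he : (2 : ℝ) * (γ - 1 / 2) = 2 * γ + ((-1 : ℤ) : ℝ) := by push_cast; ring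
      rw [he, Int.floor_add_intCast, h2γ]
      norm_num
    rw [binDigit_one, ha, hfloor]
    norm_num
  have hdtail : ∀ k : ℕ, binDigit (γ - 1 / 2) (k + 2) = binDigit γ (k + 2) := by
    intro k
    have e1 := binDigit_succ (γ - 1 / 2) (k + 1)
    have e2 := binDigit_succ γ (k + 1)
    rw [e1, e2, hfl (k + 1), hfl k]
    ring
  have hd1 : binDigit γ 1 = 1 := by
    have hfloor : ⌊γ⌋ = 0 := Int.floor_eq_zero_iff.mpr ⟨by linarith, h2⟩
    rw [binDigit_one, h2γ, hfloor]
    norm_num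
  rw [Summable.tsum_eq_zero_add (summable_kdigit (γ - 1 / 2)),
    Summable.tsum_eq_zero_add (summable_kdigit γ)]
  have : (∑' k : ℕ, ((k + 1 + 1 : ℕ) : ℝ) * (binDigit (γ - 1 / 2) (k + 1 + 1) : ℝ)
        / 2 ^ (k + 1 + 1))
      = ∑' k : ℕ, ((k + 1 + 1 : ℕ) : ℝ) * (binDigit γ (k + 1 + 1) : ℝ) / 2 ^ (k + 1 + 1) := by
    exact tsum_congr fun k => by rw [show k + 1 + 1 = k + 2 from rfl, hdtail k]
  rw [this, hd0, hd1]
  push_cast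
  ring

/-- Main theorem. -/
theorem fSteinhaus_selfaffine (γ : ℝ) (h1 : 1 / 2 ≤ γ) (h2 : γ < 1) :
    fSteinhaus (γ / 2 + 1 / 2) = (1 - γ + fSteinhaus γ) / 2 ∧
      fSteinhaus (γ / 2 + 1 / 4) = (1 - γ + fSteinhaus γ) / 2 := by
  have h0 : (0 : ℝ) ≤ γ := by linarith
  constructor
  · unfold fSteinhaus
    rw [S_half_add γ h0 h2]
    ring
  · unfold fSteinhaus
    have hrw : γ / 2 + 1 / 4 = (γ - 1 / 2) / 2 + 1 / 2 := by ring
    rw [hrw, S_half_add (γ - 1 / 2) (by linarith) (by linarith), S_sub_half γ h1 h2]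
    ring
end

section
/- Let s(n) = x₁ + ⋯ + x_n be the partial sums of the Steinhaus sequence and γ_n = n·2^{-⌈log₂ n⌉}. Then for every n ≥ 1, (s(n) − n·log₂ n)/n = ξ(γ_n), where ξ(γ) = 2 − log₂ γ − (1/γ)Σ_{k≥1} k ε_k 2^{-k} with (ε_k) the binary digits of γ (convention: infinitely many zeros; for γ = 1 all digits k ≥ 1 are zero). -/
/-- `ξ(γ) = 2 − log₂ γ − (1/γ) Σ_{k≥1} k ε_k 2^{-k}`. -/
noncomputable def xiSteinhaus (γ : ℝ) : ℝ :=
  2 - Real.logb 2 γ - (1 / γ) * ∑' k : ℕ, ((k + 1 : ℕ) : ℝ) * (binDigit γ (k + 1) : ℝ) / 2 ^ (k + 1)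

/-- Partial sums of the Steinhaus sequence `x_j = 2^(ν₂(j)+1)`. -/
def steinhausSum (n : ℕ) : ℕ :=
  ∑ j ∈ Finset.Icc 1 n, 2 ^ (padicValNat 2 j + 1)

open Finset

-- floor of nat division in ℝ
lemma floor_nat_div (a b : ℕ) : ⌊(a : ℝ) / (b : ℝ)⌋ = (a / b : ℕ) := by
  have h : ((a / b : ℚ) : ℝ) = (a : ℝ) / (b : ℝ) := by push_cast; ring
  rw [← h, Rat.floor_cast, Rat.floor_natCast_div_natCast]; omega

-- binDigit of n/2^m for 1 ≤ k ≤ m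
lemma binDigit_eq (n m k : ℕ) (hk : 1 ≤ k) (hkm : k ≤ m) :
    binDigit ((n : ℝ) / 2 ^ m) k
      = ((n / 2 ^ (m - k) : ℕ) : ℤ) - 2 * ((n / 2 ^ (m - k + 1) : ℕ) : ℤ) := by
  have h1 : (2 : ℝ) ^ k * ((n : ℝ) / 2 ^ m) = (n : ℝ) / ((2 ^ (m - k) : ℕ) : ℝ) := by
    have : (2 : ℝ) ^ m = 2 ^ k * 2 ^ (m - k) := by
      rw [← pow_add]; congr 1; omega
    rw [this]; push_cast; field_simp
  have h2 : (2 : ℝ) ^ (k - 1) * ((n : ℝ) / 2 ^ m) = (n : ℝ) / ((2 ^ (m - k + 1) : ℕ) : ℝ) := by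
    have : (2 : ℝ) ^ m = 2 ^ (k - 1) * 2 ^ (m - k + 1) := by
      rw [← pow_add]; congr 1; omega
    rw [this]; push_cast; field_simp
  rw [binDigit, h1, h2, floor_nat_div, floor_nat_div]

-- binDigit vanishes for k > m
lemma binDigit_zero (n m k : ℕ) (hk : m < k) :
    binDigit ((n : ℝ) / 2 ^ m) k = 0 := by
  have h1 : (2 : ℝ) ^ k * ((n : ℝ) / 2 ^ m) = ((n * 2 ^ (k - m) : ℕ) : ℝ) := by
    have : (2 : ℝ) ^ k = 2 ^ m * 2 ^ (k - m) := by rw [← pow_add]; congr 1; omega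
    rw [this]; push_cast; field_simp
  have h2 : (2 : ℝ) ^ (k - 1) * ((n : ℝ) / 2 ^ m) = ((n * 2 ^ (k - 1 - m) : ℕ) : ℝ) := by
    have : (2 : ℝ) ^ (k - 1) = 2 ^ m * 2 ^ (k - 1 - m) := by rw [← pow_add]; congr 1; omega
    rw [this]; push_cast; field_simp
  rw [binDigit, h1, h2, Int.floor_natCast, Int.floor_natCast]
  have : k - m = (k - 1 - m) + 1 := by omega
  rw [this]; push_cast; ring
-- geometric sum in ℕ
lemma two_pow_sum (t : ℕ) : ∑ k ∈ range t, 2 ^ k = 2 ^ t - 1 := by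
  induction t with
  | zero => simp
  | succ t ih =>
    rw [Finset.sum_range_succ, ih]
    have : 1 ≤ 2 ^ t := Nat.one_le_two_pow
    omega

lemma pow_padic_eq (j K : ℕ) (hj : 1 ≤ j) (hK : padicValNat 2 j < K) :
    2 ^ (padicValNat 2 j + 1) = 1 + ∑ k ∈ range K, if 2 ^ k ∣ j then 2 ^ k else 0 := by
  have hj0 : j ≠ 0 := by omega
  have : ∀ k, (2 ^ k ∣ j) ↔ k ≤ padicValNat 2 j := fun k =>
    padicValNat_dvd_iff_le (p := 2) hj0
  calc 2 ^ (padicValNat 2 j + 1) = 1 + (2 ^ (padicValNat 2 j + 1) - 1) := by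
        have : 1 ≤ 2 ^ (padicValNat 2 j + 1) := Nat.one_le_two_pow
        omega
    _ = 1 + ∑ k ∈ range (padicValNat 2 j + 1), 2 ^ k := by rw [two_pow_sum]
    _ = 1 + ∑ k ∈ range K, if 2 ^ k ∣ j then 2 ^ k else 0 := by
        congr 1
        rw [← Finset.sum_filter]
        congr 1
        ext k
        simp only [Finset.mem_filter, Finset.mem_range, this k]
        omega

lemma steinhausSum_eq (n K : ℕ) (hn : 1 ≤ n) (hK : n < 2 ^ K) :
    steinhausSum n = n + ∑ k ∈ range K, 2 ^ k * (n / 2 ^ k) := by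
  have key : ∀ j ∈ Finset.Icc 1 n, 2 ^ (padicValNat 2 j + 1)
      = 1 + ∑ k ∈ range K, if 2 ^ k ∣ j then 2 ^ k else 0 := by
    intro j hj
    rw [Finset.mem_Icc] at hj
    apply pow_padic_eq _ _ hj.1
    by_contra h
    push_neg at h
    have h2 : 2 ^ K ≤ 2 ^ (padicValNat 2 j) := Nat.pow_le_pow_right (by norm_num) h
    have h3 : 2 ^ (padicValNat 2 j) ∣ j := pow_padicValNat_dvd
    have h4 : 2 ^ (padicValNat 2 j) ≤ j := Nat.le_of_dvd (by omega) h3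
    omega
  rw [steinhausSum, Finset.sum_congr rfl key, Finset.sum_add_distrib]
  congr 1
  · simp [Nat.card_Icc]
  rw [Finset.sum_comm]
  apply Finset.sum_congr rfl
  intro k _
  have : Finset.Icc 1 n = Finset.Ioc 0 n := rfl
  rw [this, ← Finset.sum_filter, Finset.sum_const,
    Nat.Ioc_filter_dvd_card_eq_div, smul_eq_mul, Nat.mul_comm]

-- telescoping lemma over ℝ
lemma tele (v : ℕ → ℝ) (m : ℕ) :
    ∑ i ∈ range m, ((m : ℝ) - i) * (v i - 2 * v (i + 1)) * 2 ^ i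
      = m * v 0 - ∑ i ∈ range m, 2 ^ (i + 1) * v (i + 1) := by
  set F : ℕ → ℝ := fun i => ((m : ℝ) - i) * 2 ^ i * v i with hF
  have key : ∀ i ∈ range m,
      ((m : ℝ) - i) * (v i - 2 * v (i + 1)) * 2 ^ i
        = (F i - F (i + 1)) - 2 ^ (i + 1) * v (i + 1) := by
    intro i _
    simp only [hF]
    push_cast
    ring
  rw [Finset.sum_congr rfl key, Finset.sum_sub_distrib, Finset.sum_range_sub' F]
  simp only [hF]
  push_cast
  ring


/-- `(s(n) − n log₂ n)/n = ξ(γ_n)` with `γ_n = n 2^{-⌈log₂ n⌉}`. -/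
theorem steinhausSum_eq_xi (n : ℕ) (hn : 1 ≤ n) :
    ((steinhausSum n : ℝ) - n * Real.logb 2 n) / n =
      xiSteinhaus ((n : ℝ) * (2 : ℝ) ^ (-⌈Real.logb 2 (n : ℝ)⌉)) := by
  have hn0 : (0 : ℝ) < n := by exact_mod_cast hn
  set m := Nat.clog 2 n with hm
  have hceil : ⌈Real.logb 2 (n : ℝ)⌉ = (m : ℤ) := by
    have h := Real.ceil_logb_natCast (b := 2) (r := (n : ℝ)) (by positivity)
    rw [Int.clog_natCast] at h
    norm_num at h
    exact_mod_cast h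
  have h2m : (0 : ℝ) < 2 ^ m := by positivity
  have hγ : (n : ℝ) * (2 : ℝ) ^ (-⌈Real.logb 2 (n : ℝ)⌉) = (n : ℝ) / 2 ^ m := by
    rw [hceil, zpow_neg, zpow_natCast]; ring
  rw [hγ]
  have hle : n ≤ 2 ^ m := Nat.le_pow_clog (by norm_num) n
  set u : ℕ → ℝ := fun j => ((n / 2 ^ j : ℕ) : ℝ) with hu
  set W : ℝ := ∑ i ∈ range m, 2 ^ (i + 1) * u (i + 1) with hW
  have hu0 : u 0 = n := by simp [hu]
  -- Steinhaus sum closed form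
  have hS : (steinhausSum n : ℝ) = 2 * n + W := by
    rw [steinhausSum_eq n (m + 1) hn (by
      calc n ≤ 2 ^ m := hle
        _ < 2 ^ (m + 1) := by
          have : 0 < 2 ^ m := Nat.pow_pos (by norm_num)
          omega)]
    push_cast
    rw [Finset.sum_range_succ' (fun k => (2 : ℝ) ^ k * u k) m]
    simp only [pow_zero, one_mul, hu0, ← hW]
    ring
  -- the tsum
  set f : ℕ → ℝ :=
    fun k => ((k + 1 : ℕ) : ℝ) * (binDigit ((n : ℝ) / 2 ^ m) (k + 1) : ℝ) / 2 ^ (k + 1) with hf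
  have hvanish : ∀ k ∉ range m, f k = 0 := by
    intro k hk
    rw [Finset.mem_range, not_lt] at hk
    simp [hf, binDigit_zero n m (k + 1) (by omega)]
  have htsum : ∑' k, f k = ∑ k ∈ range m, f k := tsum_eq_sum hvanish
  have hterm : ∀ k ∈ range m,
      (2 : ℝ) ^ m * f k = ((m : ℝ) - (m - 1 - k : ℕ)) *
        (u (m - 1 - k) - 2 * u (m - 1 - k + 1)) * 2 ^ (m - 1 - k) := by
    intro k hk
    rw [Finset.mem_range] at hk
    have hd : binDigit ((n : ℝ) / 2 ^ m) (k + 1)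
        = ((n / 2 ^ (m - (k + 1)) : ℕ) : ℤ) - 2 * ((n / 2 ^ (m - (k + 1) + 1) : ℕ) : ℤ) :=
      binDigit_eq n m (k + 1) (by omega) (by omega)
    have e1 : m - (k + 1) = m - 1 - k := by omega
    rw [e1] at hd
    have hc : ((m - 1 - k : ℕ) : ℝ) = (m : ℝ) - (k + 1) := by
      have : (m - 1 - k) + (k + 1) = m := by omega
      have := congrArg (fun t : ℕ => (t : ℝ)) this
      push_cast at this
      linarith
    have hp : (2 : ℝ) ^ m = 2 ^ (k + 1) * 2 ^ (m - 1 - k) := by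
      rw [← pow_add]; congr 1; omega
    have hua : u (m - 1 - k) = ((n / 2 ^ (m - 1 - k) : ℕ) : ℝ) := rfl
    have hub : u (m - 1 - k + 1) = ((n / 2 ^ (m - 1 - k + 1) : ℕ) : ℝ) := rfl
    rw [hf]
    simp only
    rw [hd]
    simp only [Int.cast_sub, Int.cast_mul, Int.cast_natCast, Int.cast_ofNat]
    rw [← hua, ← hub, hc, hp]
    push_cast
    have h2k : (0 : ℝ) < 2 ^ (k + 1) := by positivity
    field_simp
    ring
  have hsum2 : (2 : ℝ) ^ m * ∑ k ∈ range m, f k = (m : ℝ) * n - W := by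
    rw [Finset.mul_sum, Finset.sum_congr rfl hterm,
      Finset.sum_range_reflect (fun i => ((m : ℝ) - i) * (u i - 2 * u (i + 1)) * 2 ^ i) m,
      tele u m, hu0, ← hW]
  have hT : ∑' k, f k = ((m : ℝ) * n - W) / 2 ^ m := by
    rw [htsum]
    field_simp at hsum2 ⊢
    linarith
  have hlog : Real.logb 2 ((n : ℝ) / 2 ^ m) = Real.logb 2 n - m := by
    rw [Real.logb_div (by positivity) (by positivity), Real.logb_pow,
      Real.logb_self_eq_one (by norm_num)]
    ring
  rw [xiSteinhaus]
  rw [show (∑' (k : ℕ), ((k + 1 : ℕ) : ℝ) *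
      (binDigit ((n : ℝ) / 2 ^ m) (k + 1) : ℝ) / 2 ^ (k + 1)) = ∑' k, f k from rfl, hT, hS, hlog]
  field_simp
  ring
end

section
/- For the partial sums s(n) of the Steinhaus sequence, s(n)/(n·log₂ n) → 1 as n → ∞. -/
open Filter

lemma steinhaus_succ (n : ℕ) :
    steinhausSum (n+1) = steinhausSum n + 2 ^ (padicValNat 2 (n+1) + 1) := by
  unfold steinhausSum
  rw [Finset.sum_Icc_succ_top (by omega)]

lemma pv_odd (m : ℕ) : padicValNat 2 (2*m+1) = 0 :=
  padicValNat.eq_zero_of_not_dvd (by omega)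

lemma pv_even (m : ℕ) : padicValNat 2 (2*(m+1)) = padicValNat 2 (m+1) + 1 := by
  rw [padicValNat.mul (by norm_num) (by omega), padicValNat.self (by norm_num)]
  omega

lemma steinhaus_two_mul (m : ℕ) : steinhausSum (2*m) = 2*m + 2*steinhausSum m := by
  induction m with
  | zero => simp [steinhausSum]
  | succ m ih =>
    have h1 : 2*(m+1) = (2*m+1)+1 := by ring
    rw [h1, steinhaus_succ, ← h1, pv_even, show 2*m+1 = (2*m)+1 from rfl,
      steinhaus_succ, pv_odd, ih, steinhaus_succ]
    ring

lemma steinhaus_two_mul_add_one (m : ℕ) :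
    steinhausSum (2*m+1) = 2*m + 2 + 2*steinhausSum m := by
  rw [steinhaus_succ, pv_odd, steinhaus_two_mul]; ring

lemma steinhaus_upper (n : ℕ) : steinhausSum n ≤ n * (Nat.log 2 n + 2) := by
  induction n using Nat.strong_induction_on with
  | _ n ih =>
    rcases Nat.lt_or_ge n 2 with h | h
    · interval_cases n <;> simp [steinhausSum] <;> decide
    · have hm1 : 1 ≤ n / 2 := by omega
      have hmlt : n / 2 < n := by omega
      have hlog : Nat.log 2 n = Nat.log 2 (n / 2) + 1 := by
        have h1 := Nat.log_div_base 2 n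
        have h2 : 0 < Nat.log 2 n := Nat.log_pos (by norm_num) h
        omega
      have hih := ih (n / 2) hmlt
      have hcase : n = 2*(n/2) ∨ n = 2*(n/2)+1 := by omega
      set m := n / 2
      rcases hcase with hn | hn
      · rw [hn] at hlog ⊢
        rw [steinhaus_two_mul, hlog]; nlinarith [hih]
      · rw [hn] at hlog ⊢
        rw [steinhaus_two_mul_add_one, hlog]; nlinarith [hih]

lemma steinhaus_lower (n : ℕ) (hn : 1 ≤ n) :
    n * Nat.log 2 n + Nat.log 2 n + 2 ≤ steinhausSum n := by
  induction n using Nat.strong_induction_on with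
  | _ n ih =>
    rcases Nat.lt_or_ge n 2 with h | h
    · interval_cases n; simp [steinhausSum, padicValNat.one]
    · have hm1 : 1 ≤ n / 2 := by omega
      have hmlt : n / 2 < n := by omega
      have hlog : Nat.log 2 n = Nat.log 2 (n / 2) + 1 := by
        have h1 := Nat.log_div_base 2 n
        have h2 : 0 < Nat.log 2 n := Nat.log_pos (by norm_num) h
        omega
      have hih := ih (n / 2) hmlt hm1
      have hcase : n = 2*(n/2) ∨ n = 2*(n/2)+1 := by omega
      set m := n / 2
      rcases hcase with hn | hn
      · rw [hn] at hlog ⊢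
        rw [steinhaus_two_mul, hlog]; nlinarith [hih]
      · rw [hn] at hlog ⊢
        rw [steinhaus_two_mul_add_one, hlog]; nlinarith [hih]

/-- `s(n)/(n log₂ n) → 1` as `n → ∞`. -/
theorem steinhausSum_div_tendsto_one :
    Tendsto (fun n : ℕ => (steinhausSum n : ℝ) / (n * Real.logb 2 n)) atTop (nhds 1) := by
  have hlogtop : Tendsto (fun n : ℕ => Real.logb 2 n) atTop atTop :=
    (Real.tendsto_logb_atTop (by norm_num)).comp tendsto_natCast_atTop_atTop
  have hinv : Tendsto (fun n : ℕ => 1 / Real.logb 2 n) atTop (nhds 0) := by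
    simpa [one_div, Pi.inv_def] using hlogtop.inv_tendsto_atTop
  have hlo : Tendsto (fun n : ℕ => 1 - 1 / Real.logb 2 n) atTop (nhds 1) := by
    simpa using tendsto_const_nhds.sub hinv
  have hhi : Tendsto (fun n : ℕ => 1 + 2 / Real.logb 2 n) atTop (nhds 1) := by
    have : Tendsto (fun n : ℕ => 2 / Real.logb 2 n) atTop (nhds 0) := by
      simpa [div_eq_mul_inv, one_div] using (hinv.const_mul (2:ℝ))
    simpa using tendsto_const_nhds.add this
  refine tendsto_of_tendsto_of_tendsto_of_le_of_le' hlo hhi ?_ ?_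
  · filter_upwards [eventually_ge_atTop 2] with n hn
    have hn1 : (1:ℝ) < (n:ℝ) := by exact_mod_cast Nat.lt_of_lt_of_le one_lt_two hn
    have hb : 0 < Real.logb 2 n := Real.logb_pos (by norm_num) hn1
    have hnpos : (0:ℝ) < n := by linarith
    have hL1 : Real.logb 2 n < Nat.log 2 n + 1 := by
      have h2 : (n:ℝ) < 2 ^ (Nat.log 2 n + 1) := by
        exact_mod_cast Nat.lt_pow_succ_log_self (by norm_num) n
      calc Real.logb 2 n < Real.logb 2 (2 ^ (Nat.log 2 n + 1)) :=
            Real.logb_lt_logb (by norm_num) hnpos h2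
        _ = Nat.log 2 n + 1 := by
            rw [Real.logb_pow, Real.logb_self_eq_one (by norm_num : (1:ℝ) < 2)]
            push_cast; ring
    have hs : ((n : ℝ) * Nat.log 2 n) ≤ (steinhausSum n : ℝ) := by
      have := steinhaus_lower n (by omega)
      have h' : n * Nat.log 2 n ≤ steinhausSum n := by omega
      exact_mod_cast h'
    rw [le_div_iff₀ (by positivity)]
    have key : (1 - 1/Real.logb 2 n) * ((n:ℝ) * Real.logb 2 n)
        = (n:ℝ) * Real.logb 2 n - n := by field_simp
    have h3 : (n:ℝ) * Real.logb 2 n ≤ (n:ℝ) * ((Nat.log 2 n : ℝ) + 1) :=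
      mul_le_mul_of_nonneg_left hL1.le hnpos.le
    rw [key]; linarith
  · filter_upwards [eventually_ge_atTop 2] with n hn
    have hn1 : (1:ℝ) < (n:ℝ) := by exact_mod_cast Nat.lt_of_lt_of_le one_lt_two hn
    have hb : 0 < Real.logb 2 n := Real.logb_pos (by norm_num) hn1
    have hnpos : (0:ℝ) < n := by linarith
    have hL0 : (Nat.log 2 n : ℝ) ≤ Real.logb 2 n := by
      have h2 : ((2:ℝ) ^ (Nat.log 2 n)) ≤ (n:ℝ) := by
        exact_mod_cast Nat.pow_log_le_self 2 (show n ≠ 0 by omega)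
      calc (Nat.log 2 n : ℝ) = Real.logb 2 (2 ^ (Nat.log 2 n)) := by
            rw [Real.logb_pow, Real.logb_self_eq_one (by norm_num : (1:ℝ) < 2)]; ring
        _ ≤ Real.logb 2 n := Real.logb_le_logb_of_le (by norm_num) (by positivity) h2
    have hs : (steinhausSum n : ℝ) ≤ (n : ℝ) * (Nat.log 2 n + 2) := by
      have := steinhaus_upper n
      push_cast
      exact_mod_cast this
    rw [div_le_iff₀ (by positivity)]
    calc (steinhausSum n : ℝ) ≤ (n : ℝ) * (Nat.log 2 n + 2) := hs
      _ ≤ (n : ℝ) * (Real.logb 2 n + 2) := by nlinarith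
      _ = (1 + 2 / Real.logb 2 n) * ((n:ℝ) * Real.logb 2 n) := by
          field_simp
end
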